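/- For a parallelogram a, b, c, d in ℂ with b - a = c - d (i.e., d = a + c - b), the four inserted points p_ab = f(d,a,b,c), p_bc = f(a,b,c,d), p_cd = f(b,c,d,a), p_da = f(c,d,a,b) satisfy the central symmetry p_ab + p_cd = p_bc + p_da = a + c = b + d, i.e., p_ab and p_cd are symmetric about the parallelogram's center (a+c)/2, as are p_bc and p_da. -/

import Mathlib

open Complex

/-- Complex cross-ratio. -/
noncomputable def crC (a b c d : ℂ) : ℂ := (a - b) * (c - d) / ((b - c) * (d - a))

/-- Principal square root of the cross-ratio `cr(c,a,b,d)`. -/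
noncomputable def sqrtQ (a b c d : ℂ) : ℂ := (crC c a b d) ^ ((1 : ℂ) / 2)

/-- The point-insertion rule. -/
noncomputable def fIns (a b c d : ℂ) : ℂ :=
  (c * (b - a) * sqrtQ a b c d + b * (c - a)) / ((b - a) * sqrtQ a b c d + (c - a))

lemma sqrtQ_rot (a b c d : ℂ) : sqrtQ c d a b = sqrtQ a b c d := by
  unfold sqrtQ crC
  congr 1
  congr 1 <;> ring

theorem stmt19 (a b c d : ℂ)
    (hpar : b - a = c - d)
    (hab : a ≠ b) (hac : a ≠ c) (had : a ≠ d) (hbc : b ≠ c) (hbd : b ≠ d) (hcd : c ≠ d)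
    (hden1 : (a - d) * sqrtQ d a b c + (b - d) ≠ 0)
    (hden2 : (b - a) * sqrtQ a b c d + (c - a) ≠ 0)
    (hden3 : (c - b) * sqrtQ b c d a + (d - b) ≠ 0)
    (hden4 : (d - c) * sqrtQ c d a b + (a - c) ≠ 0) :
    fIns d a b c + fIns b c d a = a + c ∧ fIns a b c d + fIns c d a b = a + c := by
  have hd : d = a + c - b := by linear_combination hpar
  have h1 : sqrtQ b c d a = sqrtQ d a b c := sqrtQ_rot d a b c
  have h2 : sqrtQ c d a b = sqrtQ a b c d := sqrtQ_rot a b c d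
  rw [h1] at hden3
  rw [h2] at hden4
  unfold fIns
  rw [h1, h2]
  subst hd
  constructor
  · rw [div_add_div _ _ hden1 hden3, div_eq_iff (mul_ne_zero hden1 hden3)]
    ring
  · rw [div_add_div _ _ hden2 hden4, div_eq_iff (mul_ne_zero hden2 hden4)]
    ring
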